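/- In the Hodgkin-Huxley model on V = H¹₀(0,1): if v ∈ V and the flow satisfies the a priori bound ‖φ^d_s(v)‖_∞ ≤ max{|V₋|,|V₊|} for s ∈ [0,T], then ‖(I−Δ)φ^d_s(v)‖_V ≤ ‖(I−Δ)v‖_V + ΓT for a constant Γ depending only on the (finitely many) coefficients γ_i, c_i, the mollifier bounds ‖φ_{z_i}‖, ‖(I−Δ)φ_{z_i}‖_V, and max{|V₋|,|V₊|}. -/
import Mathlib


open scoped RealInnerProductSpace

/-- Hodgkin–Huxley on `V = H¹₀(0,1)` (abstractly: a real Hilbert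
space `V`, semigroup `S(r)` of contractions, `J = I - Δ` commuting with `S(r)`).
Let `b(w) = Σ_i γ_i ψ_i - Σ_i c_i ⟨w, ψ_i⟩ ψ_i`.  If the mild flow
`flow s = S(s)v + ∫₀ˢ S(s-r) b(flow r) dr` satisfies the a priori bound
`|⟨flow s, ψ_i⟩| ≤ R_max ‖ψ_i‖` on `[0,T]` (coming from `‖flow s‖_∞ ≤ max{|V₋|,|V₊|}`),
then `‖J(flow s)‖ ≤ ‖J v‖ + Γ T` for a constant `Γ` depending only on the
coefficients `γ_i, c_i`, the mollifiers `ψ_i`, and `R_max`. -/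
theorem stmt_17 {V ι : Type*} [NormedAddCommGroup V] [InnerProductSpace ℝ V]
    [CompleteSpace V] [Fintype ι]
    (T : ℝ) (hT : 0 ≤ T)
    (S : ℝ → V →L[ℝ] V) (hS : ∀ r : ℝ, 0 ≤ r → ∀ x : V, ‖S r x‖ ≤ ‖x‖)
    (J : V →L[ℝ] V) (hcomm : ∀ (r : ℝ) (x : V), J (S r x) = S r (J x))
    (γ c : ι → ℝ) (ψz : ι → V) (Rmax : ℝ) (hR : 0 ≤ Rmax)
    (b : V → V)
    (hb : ∀ w : V, b w = (∑ i, γ i • ψz i) - ∑ i, (c i * ⟪w, ψz i⟫) • ψz i) :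
    ∃ Γ : ℝ, ∀ (v : V) (flow : ℝ → V),
      (∀ s ∈ Set.Icc (0:ℝ) T,
        flow s = S s v + ∫ r in (0:ℝ)..s, S (s - r) (b (flow r))) →
      (∀ i : ι, ∀ s ∈ Set.Icc (0:ℝ) T, |⟪flow s, ψz i⟫| ≤ Rmax * ‖ψz i‖) →
      ∀ s ∈ Set.Icc (0:ℝ) T, ‖J (flow s)‖ ≤ ‖J v‖ + Γ * T := by
  refine ⟨∑ i, (|γ i| * ‖J (ψz i)‖ + |c i| * (Rmax * ‖ψz i‖) * ‖J (ψz i)‖),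
    fun v flow hflow hbound s hs => ?_⟩
  set Γ : ℝ := ∑ i, (|γ i| * ‖J (ψz i)‖ + |c i| * (Rmax * ‖ψz i‖) * ‖J (ψz i)‖) with hΓ
  have hΓ0 : 0 ≤ Γ := Finset.sum_nonneg fun i _ => by positivity
  obtain ⟨hs0, hsT⟩ := hs
  -- uniform bound on ‖J (b (flow r))‖ for r ∈ [0, T]
  have hJb : ∀ r ∈ Set.Icc (0:ℝ) T, ‖J (b (flow r))‖ ≤ Γ := by
    intro r hr
    have : J (b (flow r)) =
        (∑ i, γ i • J (ψz i)) - ∑ i, (c i * ⟪flow r, ψz i⟫) • J (ψz i) := by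
      rw [hb, map_sub, map_sum, map_sum]
      simp [ContinuousLinearMap.map_smul]
    rw [this]
    refine (norm_sub_le _ _).trans ?_
    refine le_trans (add_le_add (norm_sum_le _ _) (norm_sum_le _ _)) ?_
    rw [← Finset.sum_add_distrib]
    apply Finset.sum_le_sum
    intro i _
    rw [norm_smul, norm_smul]
    rw [Real.norm_eq_abs]
    gcongr
    calc ‖c i * ⟪flow r, ψz i⟫‖ = |c i| * |⟪flow r, ψz i⟫| := by
            rw [Real.norm_eq_abs, abs_mul]
        _ ≤ |c i| * (Rmax * ‖ψz i‖) := by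
            gcongr; exact hbound i r hr
  -- apply J to the mild formulation
  have heq := hflow s ⟨hs0, hsT⟩
  have key : ‖J (flow s)‖ ≤ ‖J v‖ + Γ * s := by
    rw [heq, map_add, hcomm]
    refine (norm_add_le _ _).trans ?_
    have h1 : ‖S s (J v)‖ ≤ ‖J v‖ := hS s hs0 _
    have h2 : ‖J (∫ r in (0:ℝ)..s, S (s - r) (b (flow r)))‖ ≤ Γ * s := by
      by_cases hint : IntervalIntegrable (fun r => S (s - r) (b (flow r)))
        MeasureTheory.volume 0 s
      · rw [← ContinuousLinearMap.intervalIntegral_comp_comm J hint]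
        have := intervalIntegral.norm_integral_le_of_norm_le_const
          (C := Γ) (f := fun r => J (S (s - r) (b (flow r))))
          (a := (0:ℝ)) (b := s) ?_
        · calc ‖∫ r in (0:ℝ)..s, J (S (s - r) (b (flow r)))‖ ≤ Γ * |s - 0| := this
            _ = Γ * s := by rw [sub_zero, abs_of_nonneg hs0]
        · intro r hr
          rw [Set.uIoc_of_le hs0] at hr
          have hr' : r ∈ Set.Icc (0:ℝ) T := ⟨hr.1.le, hr.2.trans hsT⟩
          show ‖J (S (s - r) (b (flow r)))‖ ≤ Γ
          rw [hcomm]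
          exact (hS (s - r) (by linarith [hr.2]) _).trans (hJb r hr')
      · rw [intervalIntegral.integral_undef hint]
        simp only [map_zero, norm_zero]
        positivity
    linarith
  have : Γ * s ≤ Γ * T := by gcongr
  linarith
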